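/- arXiv:2109.04169 — 2 statements merged into one kernel-verified Lean document; each statement's English description precedes it below -/
import Mathlib

section
/- Let A be a Hermitian operator on ℂ²⊗ℂ² with A + (σ₀⊗σ₂)A(σ₀⊗σ₂) = I. If Π is the orthogonal projection onto the nonnegative eigenspace structure arising as in the paper (specifically, if Π is a projection with Π + (σ₀⊗σ₂)Π(σ₀⊗σ₂) = I), then PT(Π) = Π; in particular Π is a PPT operator and hence separable. -/
open Matrix ComplexOrder
open scoped Kronecker

noncomputable section

abbrev M2 : Type := Matrix (Fin 2) (Fin 2) ℂ
abbrev M4 : Type := Matrix (Fin 2 × Fin 2) (Fin 2 × Fin 2) ℂ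

/-- standard basis kets of ℂ² -/
def ket0 : Fin 2 → ℂ := ![1, 0]
def ket1 : Fin 2 → ℂ := ![0, 1]
/-- |+⟩ = (|0⟩+|1⟩)/√2 -/
def ketP : Fin 2 → ℂ := ![(((Real.sqrt 2)⁻¹ : ℝ) : ℂ), (((Real.sqrt 2)⁻¹ : ℝ) : ℂ)]
/-- |−⟩ = (|0⟩−|1⟩)/√2 -/
def ketM : Fin 2 → ℂ := ![(((Real.sqrt 2)⁻¹ : ℝ) : ℂ), -(((Real.sqrt 2)⁻¹ : ℝ) : ℂ)]

/-- outer product |v⟩⟨w| -/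
def outer {n : Type*} (v w : n → ℂ) : Matrix n n ℂ := Matrix.of fun i j => v i * star (w j)
/-- projector |v⟩⟨v| -/
def proj {n : Type*} (v : n → ℂ) : Matrix n n ℂ := outer v v

/-- tensor product of two qubit vectors -/
def kron2 (v w : Fin 2 → ℂ) : Fin 2 × Fin 2 → ℂ := fun p => v p.1 * w p.2

/-- partial transpose on the second tensor factor, in the standard basis -/
def PT (A : M4) : M4 := Matrix.of fun p q => A (p.1, q.2) (q.1, p.2)

/-- separability: a sum of tensor products of positive semidefinite operators -/
def Separable (E : M4) : Prop :=
  ∃ (k : ℕ) (X Y : Fin k → M2),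
    (∀ i, (X i).PosSemidef ∧ (Y i).PosSemidef) ∧ E = ∑ i, (X i) ⊗ₖ (Y i)

def σ0 : M2 := 1
def σ1 : M2 := !![0, 1; 1, 0]
def σ2 : M2 := !![0, -Complex.I; Complex.I, 0]

lemma proj_posSemidef {n : Type*} [Fintype n] (v : n → ℂ) : (proj v).PosSemidef := by
  rw [posSemidef_iff_dotProduct_mulVec]
  constructor
  · ext i j
    simp [proj, outer, conjTranspose_apply, mul_comm]
  · intro x
    have : star x ⬝ᵥ (proj v *ᵥ x) = star (star v ⬝ᵥ x) * (star v ⬝ᵥ x) := by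
      simp only [dotProduct, mulVec, proj, outer, of_apply, Pi.star_apply, star_sum, star_mul',
        Finset.mul_sum, Finset.sum_mul, dotProduct]
      rw [Finset.sum_comm]
      congr 1; ext i; congr 1; ext j; ring_nf
      simp [mul_comm, mul_assoc, mul_left_comm]
    rw [this]
    exact star_mul_self_nonneg _

lemma Y_psd (a c : ℝ) (hac : a^2 + c^2 = 1/4) :
    (!![((1/2 + c : ℝ) : ℂ), (a:ℂ); (a:ℂ), ((1/2 - c : ℝ):ℂ)] : M2).PosSemidef := by
  have hc2 : c^2 ≤ 1/4 := by nlinarith [sq_nonneg a]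
  have hcge : -(1/2) ≤ c := by nlinarith [sq_nonneg (c - 1/2), sq_nonneg (c + 1/2)]
  by_cases hc : (1:ℝ)/2 + c = 0
  · have ha : a = 0 := by nlinarith
    have : (!![((1/2 + c : ℝ) : ℂ), (a:ℂ); (a:ℂ), ((1/2 - c : ℝ):ℂ)] : M2) = proj ![0,1] := by
      have hcv : c = -(1/2) := by linarith
      subst hcv ha
      ext i j
      fin_cases i <;> fin_cases j <;> norm_num [proj, outer]
    rw [this]; exact proj_posSemidef _
  · have hpos : 0 < 1/2 + c := lt_of_le_of_ne (by linarith) (Ne.symm hc)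
    set t := Real.sqrt (1/2 + c) with ht
    have ht2 : t^2 = 1/2 + c := Real.sq_sqrt (le_of_lt hpos)
    have htpos : 0 < t := Real.sqrt_pos.mpr hpos
    have : (!![((1/2 + c : ℝ) : ℂ), (a:ℂ); (a:ℂ), ((1/2 - c : ℝ):ℂ)] : M2)
        = proj ![(t:ℂ), ((a/t : ℝ):ℂ)] := by
      ext i j
      have hts : t * t = 1/2 + c := Real.mul_self_sqrt hpos.le
      fin_cases i <;> fin_cases j <;>
        simp [proj, outer, ← Complex.ofReal_mul] <;> norm_cast <;>
        field_simp <;> norm_cast <;>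
        simp only [← Complex.ofReal_ofNat, ← Complex.ofReal_one, ← Complex.ofReal_mul, ← Complex.ofReal_add, ← Complex.ofReal_sub, Complex.ofReal_inj] <;>
        field_simp <;> nlinarith [hts]
    rw [this]; exact proj_posSemidef _


lemma scalar_of_eq_eigenvalues (A : M2) (hA : A.IsHermitian)
    (hd : hA.eigenvalues 0 = hA.eigenvalues 1) :
    A = ((hA.eigenvalues 0 : ℝ) : ℂ) • 1 := by
  have hs := hA.spectral_theorem
  have hdiag : Matrix.diagonal (RCLike.ofReal ∘ hA.eigenvalues)
      = ((hA.eigenvalues 0 : ℝ) : ℂ) • (1 : M2) := by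
    ext i j
    by_cases hij : i = j
    · subst hij
      fin_cases i <;> simp [Matrix.diagonal, hd, RCLike.ofReal]
    · simp [Matrix.diagonal_apply_ne _ hij, Matrix.one_apply_ne hij, hij]
  conv_lhs => rw [hs, hdiag]
  rw [Unitary.conjStarAlgAut_apply]
  simp only [Matrix.mul_smul, Matrix.smul_mul, Matrix.mul_one]
  rw [(Matrix.mem_unitaryGroup_iff).mp (hA.eigenvectorUnitary).2]

lemma simdiag (A C : M2) (hA : A.IsHermitian) (hC : C.IsHermitian) (hcomm : A * C = C * A) :
    ∃ (V : M2) (a c : Fin 2 → ℝ), V * Vᴴ = 1 ∧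
      A = V * Matrix.diagonal (fun k => ((a k : ℝ) : ℂ)) * Vᴴ ∧
      C = V * Matrix.diagonal (fun k => ((c k : ℝ) : ℂ)) * Vᴴ := by
  by_cases hd : hA.eigenvalues 0 = hA.eigenvalues 1
  · -- A is scalar; diagonalize C
    refine ⟨(hC.eigenvectorUnitary : M2), fun _ => hA.eigenvalues 0, hC.eigenvalues, ?_, ?_, ?_⟩
    · rw [← Matrix.star_eq_conjTranspose]
      exact (Matrix.mem_unitaryGroup_iff).mp (hC.eigenvectorUnitary).2
    · have h1 : Matrix.diagonal (fun _ : Fin 2 => ((hA.eigenvalues 0 : ℝ) : ℂ))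
          = ((hA.eigenvalues 0 : ℝ) : ℂ) • (1 : M2) := by
        ext i j; by_cases hij : i = j
        · subst hij; simp
        · simp [Matrix.diagonal_apply_ne _ hij, Matrix.one_apply_ne hij]
      have hAs := scalar_of_eq_eigenvalues A hA hd
      conv_lhs => rw [hAs]
      rw [h1]
      simp only [Matrix.mul_smul, Matrix.smul_mul, Matrix.mul_one]
      rw [← Matrix.star_eq_conjTranspose,
        (Matrix.mem_unitaryGroup_iff).mp (hC.eigenvectorUnitary).2]
    · rw [← Matrix.star_eq_conjTranspose]
      exact hC.spectral_theorem
  · -- A has distinct eigenvalues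
    set V : M2 := (hA.eigenvectorUnitary : M2) with hV
    have hVV : V * Vᴴ = 1 := by
      rw [← Matrix.star_eq_conjTranspose]
      exact (Matrix.mem_unitaryGroup_iff).mp (hA.eigenvectorUnitary).2
    have hVV' : Vᴴ * V = 1 := by
      rw [mul_eq_one_comm] at hVV; exact hVV
    set D : M2 := Matrix.diagonal (RCLike.ofReal ∘ hA.eigenvalues) with hD
    have hs : A = V * D * Vᴴ := by
      rw [← Matrix.star_eq_conjTranspose]; exact hA.spectral_theorem
    set C' : M2 := Vᴴ * C * V with hC'
    have hCrec : C = V * C' * Vᴴ := by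
      rw [hC']
      calc C = (V * Vᴴ) * C * (V * Vᴴ) := by rw [hVV]; simp [Matrix.mul_assoc]
      _ = V * (Vᴴ * C * V) * Vᴴ := by simp only [Matrix.mul_assoc]
    have hC'herm : C'.IsHermitian := by
      rw [hC']
      unfold Matrix.IsHermitian
      simp only [Matrix.conjTranspose_mul, Matrix.conjTranspose_conjTranspose]
      rw [hC.eq, Matrix.mul_assoc]
    have hDC' : D * C' = C' * D := by
      have h1 : V * (D * C') * Vᴴ = V * (C' * D) * Vᴴ := by
        calc V * (D * C') * Vᴴ = (V * D * Vᴴ) * (V * C' * Vᴴ) := by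
              rw [Matrix.mul_assoc (V*D) _ _, Matrix.mul_assoc V C' _, ← Matrix.mul_assoc Vᴴ V _, hVV']
              simp only [Matrix.one_mul, Matrix.mul_assoc]
        _ = A * C := by rw [← hs, ← hCrec]
        _ = C * A := hcomm
        _ = (V * C' * Vᴴ) * (V * D * Vᴴ) := by rw [← hs, ← hCrec]
        _ = V * (C' * D) * Vᴴ := by
              rw [Matrix.mul_assoc (V*C') _ _, Matrix.mul_assoc V D _, ← Matrix.mul_assoc Vᴴ V _, hVV']
              simp only [Matrix.one_mul, Matrix.mul_assoc]
      have h2 : Vᴴ * (V * (D * C') * Vᴴ) * V = Vᴴ * (V * (C' * D) * Vᴴ) * V := by rw [h1]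
      calc D * C' = (Vᴴ * V) * (D * C') * (Vᴴ * V) := by rw [hVV']; simp
      _ = Vᴴ * (V * (D * C') * Vᴴ) * V := by simp only [Matrix.mul_assoc]
      _ = Vᴴ * (V * (C' * D) * Vᴴ) * V := h2
      _ = (Vᴴ * V) * (C' * D) * (Vᴴ * V) := by simp only [Matrix.mul_assoc]
      _ = C' * D := by rw [hVV']; simp
    -- off-diagonal entries of C' vanish
    have hne : ((hA.eigenvalues 0 : ℝ) : ℂ) ≠ ((hA.eigenvalues 1 : ℝ) : ℂ) := by
      exact_mod_cast hd
    have hdne : ∀ i j : Fin 2, i ≠ j → hA.eigenvalues i ≠ hA.eigenvalues j := by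
      intro i j hij
      fin_cases i <;> fin_cases j <;>
        first | exact absurd rfl hij | exact hd | exact fun hh => hd hh.symm
    have hoff : ∀ i j : Fin 2, i ≠ j → C' i j = 0 := by
      intro i j hij
      have h0 := congrFun (congrFun hDC' i) j
      simp only [hD, Matrix.diagonal_mul, Matrix.mul_diagonal, Function.comp] at h0
      rw [mul_comm] at h0
      have h1 : C' i j * (((hA.eigenvalues i : ℝ) : ℂ) - ((hA.eigenvalues j : ℝ) : ℂ)) = 0 := by
        rw [mul_sub, sub_eq_zero]
        exact h0
      rcases mul_eq_zero.mp h1 with h2 | h2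
      · exact h2
      · exact absurd (by exact_mod_cast sub_eq_zero.mp h2) (hdne i j hij)
    have hC'diag : C' = Matrix.diagonal (fun k => (((C' k k).re : ℝ) : ℂ)) := by
      ext i j
      by_cases hij : i = j
      · subst hij
        have hconj := congrFun (congrFun hC'herm i) i
        simp only [Matrix.conjTranspose_apply] at hconj
        have him : (C' i i).im = 0 := by
          have := congrArg Complex.im hconj
          simp at this
          linarith
        simp [Matrix.diagonal_apply_eq, Complex.ext_iff, him]
      · simp [Matrix.diagonal_apply_ne _ hij, hoff i j hij]
    refine ⟨V, hA.eigenvalues, fun k => (C' k k).re, hVV, ?_, ?_⟩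
    · exact hs
    · rw [hCrec, ← hC'diag]



/-- a projection P with P + (σ₀⊗σ₂)P(σ₀⊗σ₂) = 1 satisfies PT(P) = P,
hence P is PPT and separable. -/
theorem stmt_14 (P : M4) (hP : P.IsHermitian) (hidem : P * P = P)
    (h : P + (σ0 ⊗ₖ σ2) * P * (σ0 ⊗ₖ σ2) = 1) :
    PT P = P ∧ Separable P := by
  have hPent : ∀ p q, (starRingEnd ℂ) (P q p) = P p q := by
    intro p q
    have := congrFun (congrFun hP p) q
    simpa [Matrix.conjTranspose_apply] using this
  have f1 : ∀ i j : Fin 2, P (i,1) (j,0) = P (i,0) (j,1) := by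
    intro i j
    have h' := congrFun (congrFun h (i,0)) (j,1)
    simp [Matrix.mul_apply, Fintype.sum_prod_type, Fin.sum_univ_two, σ0, σ2,
      Matrix.kroneckerMap_apply, Matrix.one_apply] at h'
    linear_combination -h' + (P (i,1) (j,0)) * Complex.I_sq
  have f2 : ∀ i j : Fin 2, P (i,1) (j,1) = (if i = j then (1:ℂ) else 0) - P (i,0) (j,0) := by
    intro i j
    have h' := congrFun (congrFun h (i,0)) (j,0)
    simp [Matrix.mul_apply, Fintype.sum_prod_type, Fin.sum_univ_two, σ0, σ2,
      Matrix.kroneckerMap_apply, Matrix.one_apply] at h'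
    linear_combination h' + (P (i,1) (j,1)) * Complex.I_sq
  have hPT : PT P = P := by
    ext ⟨i, α⟩ ⟨j, β⟩
    fin_cases α <;> fin_cases β <;> simp [PT, f1]
  refine ⟨hPT, ?_⟩
  set A : M2 := Matrix.of (fun i j => P (i,0) (j,1)) with hAdef
  set D : M2 := Matrix.of (fun i j => P (i,0) (j,0)) with hDdef
  set C : M2 := D - ((1:ℂ)/2) • 1 with hCdef
  have hDA : D * A = A * D := by
    ext i j
    have hq := congrFun (congrFun hidem (i,0)) (j,1)
    simp only [Matrix.mul_apply, Fintype.sum_prod_type, Fin.sum_univ_two] at hq ⊢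
    simp only [hAdef, hDdef, Matrix.of_apply] at hq ⊢
    simp only [f1, f2] at hq ⊢
    fin_cases i <;> fin_cases j <;> simp at hq ⊢ <;> linear_combination hq
  have hDD : D * D + A * A = D := by
    ext i j
    have hq := congrFun (congrFun hidem (i,0)) (j,0)
    simp only [Matrix.mul_apply, Fintype.sum_prod_type, Fin.sum_univ_two, Matrix.add_apply] at hq ⊢
    simp only [hAdef, hDdef, Matrix.of_apply] at hq ⊢
    simp only [f1, f2] at hq ⊢
    fin_cases i <;> fin_cases j <;> simp at hq ⊢ <;> linear_combination hq
  have hAherm : A.IsHermitian := by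
    ext i j
    simp only [Matrix.conjTranspose_apply, hAdef, Matrix.of_apply]
    rw [Complex.star_def, hPent, f1]
  have hDherm : D.IsHermitian := by
    ext i j
    simp only [Matrix.conjTranspose_apply, hDdef, Matrix.of_apply]
    rw [Complex.star_def, hPent]
  have hCherm : C.IsHermitian := by
    rw [hCdef]
    unfold Matrix.IsHermitian
    rw [Matrix.conjTranspose_sub, hDherm.eq]
    congr 1
    ext i j
    by_cases hij : i = j
    · subst hij
      simp [Matrix.conjTranspose_apply, Matrix.one_apply]
    · simp [Matrix.conjTranspose_apply, Matrix.one_apply, hij, Ne.symm hij]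
  have hcomm : A * C = C * A := by
    rw [hCdef, Matrix.mul_sub, Matrix.sub_mul, ← hDA]
    congr 1
    rw [mul_smul_comm, smul_mul_assoc, Matrix.mul_one, Matrix.one_mul]
  have hsq : A * A + C * C = ((1:ℂ)/4) • (1 : M2) := by
    have h1 : D * D = D - A * A := by rw [eq_sub_iff_add_eq]; exact hDD
    rw [hCdef, Matrix.mul_sub, Matrix.sub_mul, Matrix.sub_mul, h1]
    simp only [mul_smul_comm, smul_mul_assoc, Matrix.mul_one, Matrix.one_mul, smul_smul, smul_sub]
    module
  obtain ⟨V, a, c, hVV, hAeq, hCeq⟩ := simdiag A C hAherm hCherm hcomm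
  have hVV' : Vᴴ * V = 1 := mul_eq_one_comm.mp hVV
  set dA : M2 := Matrix.diagonal (fun k => ((a k : ℝ) : ℂ)) with hdA
  set dC : M2 := Matrix.diagonal (fun k => ((c k : ℝ) : ℂ)) with hdC
  have conj_mul : ∀ X Y : M2, (V*X*Vᴴ) * (V*Y*Vᴴ) = V*(X*Y)*Vᴴ := by
    intro X Y
    calc (V*X*Vᴴ) * (V*Y*Vᴴ) = V*(X*((Vᴴ*V)*Y))*Vᴴ := by simp only [Matrix.mul_assoc]
    _ = V*(X*Y)*Vᴴ := by rw [hVV', Matrix.one_mul]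
  have e1 : dA * dA + dC * dC = ((1:ℂ)/4) • (1 : M2) := by
    have h2 : V * (dA*dA + dC*dC) * Vᴴ = ((1:ℂ)/4) • (1 : M2) := by
      rw [Matrix.mul_add, Matrix.add_mul, ← conj_mul, ← conj_mul, ← hAeq, ← hCeq]
      exact hsq
    calc dA*dA + dC*dC = (Vᴴ*V) * (dA*dA + dC*dC) * (Vᴴ*V) := by rw [hVV']; simp
    _ = Vᴴ * (V * (dA*dA + dC*dC) * Vᴴ) * V := by simp only [Matrix.mul_assoc]
    _ = Vᴴ * (((1:ℂ)/4) • (1:M2)) * V := by rw [h2]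
    _ = ((1:ℂ)/4) • (Vᴴ * V) := by rw [Matrix.mul_smul, Matrix.smul_mul, Matrix.mul_one]
    _ = ((1:ℂ)/4) • (1:M2) := by rw [hVV']
  have hquarter : ∀ k : Fin 2, (a k)^2 + (c k)^2 = 1/4 := by
    intro k
    have he := congrFun (congrFun e1 k) k
    simp only [hdA, hdC, Matrix.add_apply, Matrix.diagonal_mul_diagonal,
      Matrix.diagonal_apply_eq, Matrix.smul_apply, Matrix.one_apply_eq, smul_eq_mul,
      mul_one] at he
    have h3 := congrArg Complex.re he
    push_cast at h3
    simpa [pow_two] using h3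
  have hAe : ∀ i j, A i j = ∑ k : Fin 2, V i k * (a k : ℂ) * (starRingEnd ℂ) (V j k) := by
    intro i j
    rw [hAeq]
    simp [hdA, Matrix.mul_apply, Fin.sum_univ_two, Matrix.diagonal, Matrix.conjTranspose_apply,
      Complex.star_def]
  have hCe : ∀ i j, C i j = ∑ k : Fin 2, V i k * (c k : ℂ) * (starRingEnd ℂ) (V j k) := by
    intro i j
    rw [hCeq]
    simp [hdC, Matrix.mul_apply, Fin.sum_univ_two, Matrix.diagonal, Matrix.conjTranspose_apply,
      Complex.star_def]
  have hIe : ∀ i j, (if i = j then (1:ℂ) else 0) = ∑ k : Fin 2, V i k * (starRingEnd ℂ) (V j k) := by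
    intro i j
    have := congrFun (congrFun hVV i) j
    simp only [Matrix.mul_apply, Fin.sum_univ_two, Matrix.conjTranspose_apply,
      Complex.star_def, Matrix.one_apply] at this
    rw [Fin.sum_univ_two]
    exact this.symm
  refine ⟨2, fun k => proj (fun i => V i k),
    fun k => !![(((1:ℝ)/2 + c k : ℝ):ℂ), ((a k : ℝ):ℂ); ((a k : ℝ):ℂ), (((1:ℝ)/2 - c k : ℝ):ℂ)],
    fun k => ⟨proj_posSemidef _, Y_psd (a k) (c k) (by linarith [hquarter k])⟩, ?_⟩
  ext ⟨i, α⟩ ⟨j, β⟩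
  have hCij := hCe i j
  have hAij := hAe i j
  have hIij := hIe i j
  simp only [hCdef, hDdef, hAdef, Matrix.sub_apply, Matrix.smul_apply, Matrix.one_apply,
    Matrix.of_apply, smul_eq_mul, Fin.sum_univ_two] at hCij hAij
  simp only [Fin.sum_univ_two] at hIij
  simp only [Matrix.sum_apply, Fin.sum_univ_two, Matrix.kroneckerMap_apply, proj, outer,
    Matrix.of_apply, Complex.star_def]
  fin_cases α <;> fin_cases β <;>
    simp only [show ((0:Fin 2) : Fin 2) = 0 from rfl, Matrix.cons_val', Matrix.cons_val_zero,
      Matrix.cons_val_one, Matrix.head_cons, Matrix.empty_val', Matrix.cons_val_fin_one,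
      Matrix.head_fin_const, Fin.isValue] <;> simp <;>
    push_cast <;>
    [ (linear_combination hCij + (1/2) * hIij);
      (linear_combination hAij);
      (rw [f1 i j]; linear_combination hAij);
      (rw [f2 i j]; linear_combination (1/2) * hIij - hCij) ]
end
end

section
/- Let γ ≥ 2, and for the ensemble of Example 2 define the Hermitian operator H̃ = (1/4)K₀ + (1/4)K₁ with K₀, K₁ as above. Then for each ω ∈ {0,1}×{+,−}, the operator H̃ − (1/4)ρ̃ω is a sum of a positive semidefinite operator and the partial transpose of a positive semidefinite operator; consequently Tr((H̃ − (1/4)ρ̃ω)B) ≥ 0 for every separable positive semidefinite operator B, and 2Tr H̃ = (1/2)(1 + √(1+γ+γ²)/(1+γ)). -/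
open Matrix ComplexOrder
open scoped Kronecker

noncomputable section

/-- Example 2 states (ρ₀, ρ₁, ρ₊ as in Example 1; ρ₋ = |+⟩⟨+|⊗|−⟩⟨−|) -/
def ρ00' : M4 := proj ket0 ⊗ₖ proj ket0
def ρ01' : M4 := proj ket0 ⊗ₖ proj ket1
def ρPP' : M4 := proj ketP ⊗ₖ proj ketP
def ρPM' : M4 := proj ketP ⊗ₖ proj ketM

/-- average states ρ̃₍b,±₎ = (γ/(1+γ))|0⟩⟨0|⊗|b⟩⟨b| + (1/(1+γ))|+⟩⟨+|⊗|±⟩⟨±| -/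
def rt0p (γ : ℝ) : M4 :=
  ((γ / (1 + γ) : ℝ) : ℂ) • (proj ket0 ⊗ₖ proj ket0)
    + ((1 / (1 + γ) : ℝ) : ℂ) • (proj ketP ⊗ₖ proj ketP)
def rt0m (γ : ℝ) : M4 :=
  ((γ / (1 + γ) : ℝ) : ℂ) • (proj ket0 ⊗ₖ proj ket0)
    + ((1 / (1 + γ) : ℝ) : ℂ) • (proj ketP ⊗ₖ proj ketM)
def rt1p (γ : ℝ) : M4 :=
  ((γ / (1 + γ) : ℝ) : ℂ) • (proj ket0 ⊗ₖ proj ket1)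
    + ((1 / (1 + γ) : ℝ) : ℂ) • (proj ketP ⊗ₖ proj ketP)
def rt1m (γ : ℝ) : M4 :=
  ((γ / (1 + γ) : ℝ) : ℂ) • (proj ket0 ⊗ₖ proj ket1)
    + ((1 / (1 + γ) : ℝ) : ℂ) • (proj ketP ⊗ₖ proj ketM)

/-- `IsSpectralPair A P N` : P and N are the orthogonal projections onto the positive and
negative eigenspaces of the Hermitian operator A (whose eigenvalues are all nonzero, so
that P + N = 1). -/
def IsSpectralPair (A P N : M4) : Prop :=
  P.IsHermitian ∧ N.IsHermitian ∧ P * P = P ∧ N * N = N ∧ P + N = 1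
    ∧ P * A = A * P ∧ (A * P).PosSemidef ∧ ((-A) * N).PosSemidef
    ∧ ∀ v : Fin 2 × Fin 2 → ℂ, A *ᵥ v = 0 → P *ᵥ v = 0

def blk (A B C D : M2) : M4 :=
  Matrix.of fun p q => ![![A, B], ![C, D]] p.1 q.1 p.2 q.2

lemma blk_mul (A B C D E F G H : M2) :
    blk A B C D * blk E F G H =
      blk (A*E + B*G) (A*F + B*H) (C*E + D*G) (C*F + D*H) := by
  ext ⟨i,j⟩ ⟨k,l⟩
  fin_cases i <;> fin_cases k <;>
    simp [blk, Matrix.mul_apply, Fintype.sum_prod_type, Fin.sum_univ_two]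

lemma blk_add (A B C D E F G H : M2) :
    blk A B C D + blk E F G H = blk (A+E) (B+F) (C+G) (D+H) := by
  ext ⟨i,j⟩ ⟨k,l⟩
  fin_cases i <;> fin_cases k <;> simp [blk]

lemma blk_sub (A B C D E F G H : M2) :
    blk A B C D - blk E F G H = blk (A-E) (B-F) (C-G) (D-H) := by
  ext ⟨i,j⟩ ⟨k,l⟩
  fin_cases i <;> fin_cases k <;> simp [blk]

lemma blk_smul (c : ℂ) (A B C D : M2) :
    c • blk A B C D = blk (c•A) (c•B) (c•C) (c•D) := by
  ext ⟨i,j⟩ ⟨k,l⟩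
  fin_cases i <;> fin_cases k <;> simp [blk]

lemma blk_one : (1 : M4) = blk 1 0 0 1 := by
  ext ⟨i,j⟩ ⟨k,l⟩
  fin_cases i <;> fin_cases k <;>
    simp [blk, Matrix.one_apply, Prod.ext_iff]

lemma blk_trace (A B C D : M2) : (blk A B C D).trace = A.trace + D.trace := by
  simp [Matrix.trace, Fintype.sum_prod_type, Fin.sum_univ_two, blk, Matrix.diag]

lemma kron_blk (X Y : M2) :
    X ⊗ₖ Y = blk (X 0 0 • Y) (X 0 1 • Y) (X 1 0 • Y) (X 1 1 • Y) := by
  ext ⟨i,j⟩ ⟨k,l⟩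
  fin_cases i <;> fin_cases k <;> simp [blk, Matrix.kroneckerMap_apply]

lemma blk_conjTranspose (A B C D : M2) :
    (blk A B C D)ᴴ = blk Aᴴ Cᴴ Bᴴ Dᴴ := by
  ext ⟨i,j⟩ ⟨k,l⟩
  fin_cases i <;> fin_cases k <;> simp [blk, Matrix.conjTranspose_apply]



lemma PT_blk (A B C D : M2) : PT (blk A B C D) = blk Aᵀ Bᵀ Cᵀ Dᵀ := by
  ext ⟨i,j⟩ ⟨k,l⟩
  fin_cases i <;> fin_cases k <;> simp [blk, PT]

lemma PT_add (A B : M4) : PT (A + B) = PT A + PT B := rfl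
lemma PT_smul (c : ℂ) (A : M4) : PT (c • A) = c • PT A := rfl
lemma PT_sub (A B : M4) : PT (A - B) = PT A - PT B := rfl

lemma trace_PT_mul (X B : M4) : (PT X * B).trace = (X * PT B).trace := by
  simp only [Matrix.trace, Matrix.diag, Matrix.mul_apply, PT, Fintype.sum_prod_type,
    Fin.sum_univ_two, Matrix.of_apply]
  ring

-- psd lemmas
lemma psd_smul {A : M4} (hA : A.PosSemidef) {c : ℝ} (hc : 0 ≤ c) :
    ((c:ℂ) • A).PosSemidef := by
  refine Matrix.PosSemidef.of_dotProduct_mulVec_nonneg ?_ ?_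
  · unfold Matrix.IsHermitian
    rw [Matrix.conjTranspose_smul, hA.1.eq]
    simp
  · intro x
    rw [Matrix.smul_mulVec, dotProduct_smul]
    exact mul_nonneg (by exact_mod_cast hc) (hA.dotProduct_mulVec_nonneg x)

lemma psd_trace {A : M4} (hA : A.PosSemidef) : 0 ≤ A.trace := by
  rw [Matrix.trace]
  refine Finset.sum_nonneg fun i _ => ?_
  have := hA.dotProduct_mulVec_nonneg (Pi.single i 1)
  simpa [dotProduct, Matrix.mulVec, Pi.single_apply, Finset.sum_ite_eq,
    Matrix.diag] using this

open scoped MatrixOrder in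
lemma psd_exists_conjTranspose_mul {n : Type*} [Fintype n] [DecidableEq n] {M : Matrix n n ℂ}
    (hM : M.PosSemidef) : ∃ C : Matrix n n ℂ, M = Cᴴ * C := by
  obtain ⟨C, hC⟩ := CStarAlgebra.nonneg_iff_eq_star_mul_self.mp hM.nonneg
  exact ⟨C, hC⟩

lemma psd_mul_trace {M B : M4} (hM : M.PosSemidef) (hB : B.PosSemidef) :
    0 ≤ (M * B).trace := by
  obtain ⟨C, rfl⟩ := psd_exists_conjTranspose_mul hM
  rw [Matrix.mul_assoc, Matrix.trace_mul_comm]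
  have : C * B * Cᴴ = C * B * Cᴴ := rfl
  have h2 := psd_trace (hB.mul_mul_conjTranspose_same C)
  simpa [Matrix.mul_assoc] using h2

lemma sqrt2_sq : ((((Real.sqrt 2)⁻¹ : ℝ) : ℂ)) * ((((Real.sqrt 2)⁻¹ : ℝ) : ℂ)) = 1/2 := by
  rw [← Complex.ofReal_mul, ← mul_inv]
  rw [Real.mul_self_sqrt (by norm_num)]
  norm_num

lemma sqrt2_sq' : (((Real.sqrt 2 : ℝ) : ℂ))⁻¹ * (((Real.sqrt 2 : ℝ) : ℂ))⁻¹ = 2⁻¹ := by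
  have := sqrt2_sq
  push_cast at this ⊢
  simpa using this

lemma proj0 : proj ket0 = !![1,0;0,0] := by
  ext i j; fin_cases i <;> fin_cases j <;> simp [proj, outer, ket0]

lemma proj1 : proj ket1 = !![0,0;0,1] := by
  ext i j; fin_cases i <;> fin_cases j <;> simp [proj, outer, ket1]

lemma projP : proj ketP = !![1/2,1/2;1/2,1/2] := by
  ext i j; fin_cases i <;> fin_cases j <;>
    simp [proj, outer, ketP, Complex.conj_ofReal, sqrt2_sq, sqrt2_sq']

lemma projM : proj ketM = !![1/2,-(1/2);-(1/2),1/2] := by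
  ext i j; fin_cases i <;> fin_cases j <;>
    simp [proj, outer, ketM, Complex.conj_ofReal, sqrt2_sq, sqrt2_sq']

lemma psd_proj {n : Type*} [Fintype n] [DecidableEq n] (v : n → ℂ) : (proj v).PosSemidef := by
  refine Matrix.PosSemidef.of_dotProduct_mulVec_nonneg ?_ ?_
  · ext i j
    simp [proj, outer, Matrix.conjTranspose_apply, mul_comm]
  · intro x
    have : dotProduct (star x) (proj v *ᵥ x) =
        star (dotProduct (star v) x) * (dotProduct (star v) x) := by
      simp only [dotProduct, Matrix.mulVec, proj, outer, Matrix.of_apply,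
        Pi.star_apply, star_sum, star_mul', star_star]
      rw [Finset.sum_mul]
      congr 1; ext i
      rw [Finset.mul_sum, Finset.mul_sum]
      congr 1; ext j
      ring
    rw [this]
    exact star_mul_self_nonneg _

-- K decomposition identities
lemma Kdec (ρ σ P N : M4) (hPN : P + N = 1) :
    ((1/2:ℂ)•(ρ*P) + (1/2:ℂ)•(σ*N) = (1/2:ℂ)•σ + (1/2:ℂ)•((ρ-σ)*P))
    ∧ ((1/2:ℂ)•(ρ*P) + (1/2:ℂ)•(σ*N) - (1/2:ℂ)•ρ = (1/2:ℂ)•((-(ρ-σ))*N))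
    ∧ ((1/2:ℂ)•(ρ*P) + (1/2:ℂ)•(σ*N) - (1/2:ℂ)•σ = (1/2:ℂ)•((ρ-σ)*P)) := by
  have hN : N = 1 - P := by rw [← hPN]; abel
  subst hN
  refine ⟨?_, ?_, ?_⟩ <;>
  · simp only [Matrix.sub_mul, Matrix.mul_sub, Matrix.neg_mul, Matrix.mul_one, Matrix.sub_mul]
    module

open scoped MatrixOrder Matrix.Norms.L2Operator in
lemma Sfacts (A P N T : M4) (hPP : P * P = P) (hPN : P + N = 1)
    (hcomm : P * A = A * P) (hpos : (A * P).PosSemidef) (hneg : ((-A) * N).PosSemidef)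
    (hT : T.PosSemidef) (hTsq : T * T = A * A) :
    A * P = (1/2:ℂ)•T + (1/2:ℂ)•A := by
  have hN : N = 1 - P := by rw [← hPN]; abel
  set S : M4 := A * (P - N) with hS
  have hSdec : S = A * P + (-A) * N := by
    rw [hS, hN]
    simp only [Matrix.mul_sub, Matrix.sub_mul, Matrix.neg_mul, Matrix.mul_one]
    abel
  have hSpsd : S.PosSemidef := hSdec ▸ hpos.add hneg
  have hcomm' : (P - N) * A = A * (P - N) := by
    rw [hN]
    simp only [Matrix.sub_mul, Matrix.mul_sub, Matrix.one_mul, Matrix.mul_one, hcomm]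
  have hsq : (P - N) * (P - N) = 1 := by
    rw [hN]
    simp only [Matrix.sub_mul, Matrix.mul_sub, Matrix.one_mul, Matrix.mul_one, hPP]
    abel
  have hSsq : S * S = A * A := by
    calc S * S = A * ((P - N) * A) * (P - N) := by rw [hS]; noncomm_ring
    _ = A * A * ((P - N) * (P - N)) := by rw [hcomm']; noncomm_ring
    _ = A * A := by rw [hsq, Matrix.mul_one]
  have hST : S = T := by
    apply (CFC.sq_eq_sq_iff S T hSpsd.nonneg hT.nonneg).mp
    rw [pow_two, pow_two, hSsq, hTsq]
  -- A*P = ½(S + A)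
  have : (2:ℂ) • (A * P) = S + A := by
    rw [hS, hN]
    simp only [Matrix.mul_sub, Matrix.sub_mul, Matrix.mul_one]
    module
  have h2 : A * P = (1/2:ℂ) • (S + A) := by
    rw [← this]; rw [smul_smul]; norm_num
  rw [h2, hST, smul_add]


-- concrete matrices
set_option maxHeartbeats 1000000 in
def aR (γ:ℝ) : ℝ := γ/(1+γ)
def hhR (γ:ℝ) : ℝ := 1/(2*(1+γ))
def Xm (γ:ℝ) : M2 := !![((aR γ:ℝ):ℂ), ((hhR γ:ℝ):ℂ); ((hhR γ:ℝ):ℂ), -((aR γ:ℝ):ℂ)]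
def Xm' (γ:ℝ) : M2 := !![-((aR γ:ℝ):ℂ), ((hhR γ:ℝ):ℂ); ((hhR γ:ℝ):ℂ), ((aR γ:ℝ):ℂ)]
def Sm (γ:ℝ) : M2 := !![0, ((hhR γ:ℝ):ℂ); ((hhR γ:ℝ):ℂ), 0]
def A1c (γ:ℝ) : M4 := blk (Xm γ) (Sm γ) (Sm γ) (Sm γ)
def A2c (γ:ℝ) : M4 := blk (Xm' γ) (Sm γ) (Sm γ) (Sm γ)
def Um (γ:ℝ) : M2 := ((aR γ^2 + 2*hhR γ^2 : ℝ):ℂ) • 1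
def Wm (γ:ℝ) : M2 := ((2*hhR γ^2 : ℝ):ℂ) • 1
def Vm (γ:ℝ) : M2 := !![((2*hhR γ^2:ℝ):ℂ), ((aR γ*hhR γ:ℝ):ℂ); -((aR γ*hhR γ:ℝ):ℂ), ((2*hhR γ^2:ℝ):ℂ)]
def VmT (γ:ℝ) : M2 := !![((2*hhR γ^2:ℝ):ℂ), -((aR γ*hhR γ:ℝ):ℂ); ((aR γ*hhR γ:ℝ):ℂ), ((2*hhR γ^2:ℝ):ℂ)]
def B1c (γ:ℝ) : M4 := blk (Um γ) (Vm γ) (VmT γ) (Wm γ)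
def B2c (γ:ℝ) : M4 := blk (Um γ) (VmT γ) (Vm γ) (Wm γ)

lemma blk_ext {A B C D A' B' C' D' : M2} (h1 : A = A') (h2 : B = B')
    (h3 : C = C') (h4 : D = D') : blk A B C D = blk A' B' C' D' := by
  rw [h1, h2, h3, h4]

set_option maxHeartbeats 1000000 in
lemma hA1 (γ:ℝ) (hne : (1+γ) ≠ 0) : rt0p γ - rt1m γ = A1c γ := by
  have hne' : (1+(γ:ℂ)) ≠ 0 := by exact_mod_cast hne
  unfold rt0p rt1m A1c Xm Sm
  rw [proj0, proj1, projP, projM]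
  simp only [kron_blk]
  norm_num
  simp only [blk_smul, blk_add, blk_sub]
  apply blk_ext <;> (ext i j; fin_cases i <;> fin_cases j) <;>
    simp [aR, hhR] <;> (push_cast; field_simp [hne']; try ring)

set_option maxHeartbeats 1000000 in
lemma hA2 (γ:ℝ) (hne : (1+γ) ≠ 0) : rt1p γ - rt0m γ = A2c γ := by
  have hne' : (1+(γ:ℂ)) ≠ 0 := by exact_mod_cast hne
  unfold rt1p rt0m A2c Xm' Sm
  rw [proj0, proj1, projP, projM]
  simp only [kron_blk]
  norm_num
  simp only [blk_smul, blk_add, blk_sub]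
  apply blk_ext <;> (ext i j; fin_cases i <;> fin_cases j) <;>
    simp [aR, hhR] <;> (push_cast; field_simp [hne']; try ring)

set_option maxHeartbeats 1000000 in
lemma hB1 (γ:ℝ) : A1c γ * A1c γ = B1c γ := by
  unfold A1c B1c Xm Sm Um Vm VmT Wm
  rw [blk_mul]
  apply blk_ext <;> (ext i j; fin_cases i <;> fin_cases j) <;>
    simp [Matrix.mul_apply, Fin.sum_univ_two, Matrix.one_apply] <;> (push_cast; ring)

set_option maxHeartbeats 1000000 in
lemma hB2 (γ:ℝ) : A2c γ * A2c γ = B2c γ := by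
  unfold A2c B2c Xm' Sm Um Vm VmT Wm
  rw [blk_mul]
  apply blk_ext <;> (ext i j; fin_cases i <;> fin_cases j) <;>
    simp [Matrix.mul_apply, Fin.sum_univ_two, Matrix.one_apply] <;> (push_cast; ring)

set_option maxHeartbeats 1600000 in
lemma hB1sq (γ:ℝ) : B1c γ * B1c γ =
    ((aR γ^2 + 4*hhR γ^2 : ℝ):ℂ) • B1c γ - ((aR γ^2 * hhR γ^2 : ℝ):ℂ) • 1 := by
  unfold B1c Um Vm VmT Wm
  rw [blk_mul, blk_one, blk_smul, blk_smul, blk_sub]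
  apply blk_ext <;> (ext i j; fin_cases i <;> fin_cases j) <;>
    simp [Matrix.mul_apply, Fin.sum_univ_two, Matrix.one_apply] <;> (push_cast; ring)

set_option maxHeartbeats 1600000 in
lemma hB2sq (γ:ℝ) : B2c γ * B2c γ =
    ((aR γ^2 + 4*hhR γ^2 : ℝ):ℂ) • B2c γ - ((aR γ^2 * hhR γ^2 : ℝ):ℂ) • 1 := by
  unfold B2c Um Vm VmT Wm
  rw [blk_mul, blk_one, blk_smul, blk_smul, blk_sub]
  apply blk_ext <;> (ext i j; fin_cases i <;> fin_cases j) <;>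
    simp [Matrix.mul_apply, Fin.sum_univ_two, Matrix.one_apply] <;> (push_cast; ring)

lemma hPTB1 (γ:ℝ) : PT (B1c γ) = B2c γ := by
  unfold B1c B2c
  rw [PT_blk]
  apply blk_ext <;> (ext i j; fin_cases i <;> fin_cases j) <;>
    simp [Um, Vm, VmT, Wm, Matrix.transpose_apply, Matrix.one_apply]

lemma hPTA1 (γ:ℝ) : PT (A1c γ) = A1c γ := by
  unfold A1c
  rw [PT_blk]
  apply blk_ext <;> (ext i j; fin_cases i <;> fin_cases j) <;>
    simp [Xm, Sm, Matrix.transpose_apply]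

lemma hPTA2 (γ:ℝ) : PT (A2c γ) = A2c γ := by
  unfold A2c
  rw [PT_blk]
  apply blk_ext <;> (ext i j; fin_cases i <;> fin_cases j) <;>
    simp [Xm', Sm, Matrix.transpose_apply]

lemma hermA1 (γ:ℝ) : (A1c γ)ᴴ = A1c γ := by
  unfold A1c
  rw [blk_conjTranspose]
  apply blk_ext <;> (ext i j; fin_cases i <;> fin_cases j) <;>
    simp [Xm, Sm, Matrix.conjTranspose_apply, Complex.conj_ofReal]

lemma hermA2 (γ:ℝ) : (A2c γ)ᴴ = A2c γ := by
  unfold A2c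
  rw [blk_conjTranspose]
  apply blk_ext <;> (ext i j; fin_cases i <;> fin_cases j) <;>
    simp [Xm', Sm, Matrix.conjTranspose_apply, Complex.conj_ofReal]

lemma traceA1 (γ:ℝ) : (A1c γ).trace = 0 := by
  unfold A1c Xm Sm
  rw [blk_trace]
  simp [Matrix.trace_fin_two_of]

lemma traceA2 (γ:ℝ) : (A2c γ).trace = 0 := by
  unfold A2c Xm' Sm
  rw [blk_trace]
  simp [Matrix.trace_fin_two_of]

lemma traceB1 (γ:ℝ) : (B1c γ).trace = ((2*aR γ^2 + 8*hhR γ^2 : ℝ):ℂ) := by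
  unfold B1c Um Vm VmT Wm
  rw [blk_trace]
  simp [Matrix.trace_smul, Matrix.trace_one, Matrix.trace_fin_two_of]
  push_cast; ring

lemma traceB2 (γ:ℝ) : (B2c γ).trace = ((2*aR γ^2 + 8*hhR γ^2 : ℝ):ℂ) := by
  unfold B2c Um Vm VmT Wm
  rw [blk_trace]
  simp [Matrix.trace_smul, Matrix.trace_one, Matrix.trace_fin_two_of]
  push_cast; ring

lemma PT_one : PT (1 : M4) = 1 := by
  ext ⟨i,j⟩ ⟨k,l⟩
  by_cases h : j = l <;> simp [PT, Matrix.one_apply, Prod.ext_iff, h, eq_comm]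

lemma PT_kron (X Y : M2) : PT (X ⊗ₖ Y) = X ⊗ₖ Yᵀ := by
  ext ⟨i,j⟩ ⟨k,l⟩
  simp [PT, Matrix.kroneckerMap_apply, Matrix.transpose_apply]

lemma PT_sum {k : ℕ} (M : Fin k → M4) : PT (∑ i, M i) = ∑ i, PT (M i) := by
  ext p q
  simp [PT, Matrix.sum_apply]

lemma transpose_proj0 : (proj ket0)ᵀ = proj ket0 := by
  rw [proj0]; ext i j; fin_cases i <;> fin_cases j <;> simp

lemma transpose_proj1 : (proj ket1)ᵀ = proj ket1 := by
  rw [proj1]; ext i j; fin_cases i <;> fin_cases j <;> simp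

lemma transpose_projP : (proj ketP)ᵀ = proj ketP := by
  rw [projP]; ext i j; fin_cases i <;> fin_cases j <;> simp

lemma transpose_projM : (proj ketM)ᵀ = proj ketM := by
  rw [projM]; ext i j; fin_cases i <;> fin_cases j <;> simp

lemma PT_rt0p (γ:ℝ) : PT (rt0p γ) = rt0p γ := by
  unfold rt0p
  rw [PT_add, PT_smul, PT_smul, PT_kron, PT_kron, transpose_proj0, transpose_projP]

lemma PT_rt1p (γ:ℝ) : PT (rt1p γ) = rt1p γ := by
  unfold rt1p
  rw [PT_add, PT_smul, PT_smul, PT_kron, PT_kron, transpose_proj1, transpose_projP]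

lemma PT_rt0m (γ:ℝ) : PT (rt0m γ) = rt0m γ := by
  unfold rt0m
  rw [PT_add, PT_smul, PT_smul, PT_kron, PT_kron, transpose_proj0, transpose_projM]

lemma PT_rt1m (γ:ℝ) : PT (rt1m γ) = rt1m γ := by
  unfold rt1m
  rw [PT_add, PT_smul, PT_smul, PT_kron, PT_kron, transpose_proj1, transpose_projM]

set_option maxHeartbeats 800000 in
lemma psd_kron {X Y : M2} (hX : X.PosSemidef) (hY : Y.PosSemidef) : (X ⊗ₖ Y).PosSemidef := by
  obtain ⟨C, rfl⟩ := psd_exists_conjTranspose_mul hX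
  obtain ⟨D, rfl⟩ := psd_exists_conjTranspose_mul hY
  rw [Matrix.mul_kronecker_mul]
  have h : Cᴴ ⊗ₖ Dᴴ = (C ⊗ₖ D)ᴴ := by
    ext ⟨i,j⟩ ⟨k,l⟩
    simp [Matrix.kroneckerMap_apply, Matrix.conjTranspose_apply, star_mul', mul_comm]
  rw [h]
  exact Matrix.posSemidef_conjTranspose_mul_self _

lemma psd_sum {k : ℕ} (M : Fin k → M4) (h : ∀ i, (M i).PosSemidef) :
    (∑ i, M i).PosSemidef := by
  refine Matrix.PosSemidef.of_dotProduct_mulVec_nonneg ?_ ?_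
  · unfold Matrix.IsHermitian
    rw [Matrix.conjTranspose_sum]
    exact Finset.sum_congr rfl fun i _ => (h i).1
  · intro x
    have e : (∑ i, M i) *ᵥ x = ∑ i, (M i) *ᵥ x := by
      ext j
      simp [Matrix.mulVec, dotProduct, Matrix.sum_apply, Finset.sum_mul]
      rw [Finset.sum_comm]
    rw [e]
    have e2 : star x ⬝ᵥ (∑ i, (M i) *ᵥ x) = ∑ i, star x ⬝ᵥ ((M i) *ᵥ x) := by
      simp [dotProduct, Finset.mul_sum]
      rw [Finset.sum_comm]
    rw [e2]
    exact Finset.sum_nonneg fun i _ => (h i).dotProduct_mulVec_nonneg x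

lemma sep_psd {B : M4} (hB : Separable B) : B.PosSemidef ∧ (PT B).PosSemidef := by
  obtain ⟨k, X, Y, hXY, rfl⟩ := hB
  constructor
  · exact psd_sum _ fun i => psd_kron (hXY i).1 (hXY i).2
  · rw [PT_sum]
    refine psd_sum _ fun i => ?_
    rw [PT_kron]
    exact psd_kron (hXY i).1 (hXY i).2.transpose

lemma trace_kron (X Y : M2) : (X ⊗ₖ Y).trace = X.trace * Y.trace := by
  rw [kron_blk, blk_trace]
  simp [Matrix.trace_smul, smul_eq_mul, Matrix.trace_fin_two]
  ring

lemma trace_rt0p (γ:ℝ) (hne : (1+γ) ≠ 0) : (rt0p γ).trace = 1 := by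
  have hne' : (1+(γ:ℂ)) ≠ 0 := by exact_mod_cast hne
  unfold rt0p
  rw [Matrix.trace_add, Matrix.trace_smul, Matrix.trace_smul, trace_kron, trace_kron]
  simp only [proj0, proj1, projP, projM, Matrix.trace_fin_two_of]
  push_cast
  field_simp
  simp only [smul_eq_mul]
  linear_combination mul_inv_cancel₀ hne'

lemma trace_rt1m (γ:ℝ) (hne : (1+γ) ≠ 0) : (rt1m γ).trace = 1 := by
  have hne' : (1+(γ:ℂ)) ≠ 0 := by exact_mod_cast hne
  unfold rt1m
  rw [Matrix.trace_add, Matrix.trace_smul, Matrix.trace_smul, trace_kron, trace_kron]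
  simp only [proj0, proj1, projP, projM, Matrix.trace_fin_two_of]
  push_cast
  field_simp
  simp only [smul_eq_mul]
  linear_combination mul_inv_cancel₀ hne'

lemma trace_rt1p (γ:ℝ) (hne : (1+γ) ≠ 0) : (rt1p γ).trace = 1 := by
  have hne' : (1+(γ:ℂ)) ≠ 0 := by exact_mod_cast hne
  unfold rt1p
  rw [Matrix.trace_add, Matrix.trace_smul, Matrix.trace_smul, trace_kron, trace_kron]
  simp only [proj0, proj1, projP, projM, Matrix.trace_fin_two_of]
  push_cast
  field_simp
  simp only [smul_eq_mul]
  linear_combination mul_inv_cancel₀ hne'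

lemma trace_rt0m (γ:ℝ) (hne : (1+γ) ≠ 0) : (rt0m γ).trace = 1 := by
  have hne' : (1+(γ:ℂ)) ≠ 0 := by exact_mod_cast hne
  unfold rt0m
  rw [Matrix.trace_add, Matrix.trace_smul, Matrix.trace_smul, trace_kron, trace_kron]
  simp only [proj0, proj1, projP, projM, Matrix.trace_fin_two_of]
  push_cast
  field_simp
  simp only [smul_eq_mul]
  linear_combination mul_inv_cancel₀ hne'

lemma rt_swap (γ:ℝ) : rt0p γ + rt1m γ = rt1p γ + rt0m γ := by
  unfold rt0p rt1m rt1p rt0m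
  abel

def dG (γ:ℝ) : ℝ := Real.sqrt (1+γ+γ^2)
def sS (γ:ℝ) : ℝ := (1+γ)/dG γ
def tT (γ:ℝ) : ℝ := aR γ * hhR γ
def T1c (γ:ℝ) : M4 := ((sS γ:ℝ):ℂ) • B1c γ + ((sS γ * tT γ:ℝ):ℂ) • 1
def T2c (γ:ℝ) : M4 := ((sS γ:ℝ):ℂ) • B2c γ + ((sS γ * tT γ:ℝ):ℂ) • 1

section scal
variable {γ : ℝ} (hγ : 2 ≤ γ)
include hγ

lemma h1γ : (0:ℝ) < 1 + γ := by linarith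
lemma hGpos : (0:ℝ) < 1 + γ + γ^2 := by nlinarith
lemma hdpos : 0 < dG γ := Real.sqrt_pos.mpr (hGpos hγ)
lemma hdsq : dG γ^2 = 1 + γ + γ^2 := Real.sq_sqrt (hGpos hγ).le

lemma hs2 : sS γ^2 = (1+γ)^2/(1+γ+γ^2) := by
  unfold sS
  rw [div_pow, hdsq hγ]

lemma hpt : aR γ^2 + 4*hhR γ^2 + 2*tT γ = (1+γ+γ^2)/(1+γ)^2 := by
  have hne := (h1γ hγ).ne'
  unfold tT aR hhR
  field_simp
  ring

lemma R1 : sS γ^2 * (aR γ^2 + 4*hhR γ^2) + 2 * sS γ * (sS γ * tT γ) = 1 := by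
  have hne := (h1γ hγ).ne'
  have hGne := (hGpos hγ).ne'
  have e : sS γ^2 * (aR γ^2 + 4*hhR γ^2) + 2 * sS γ * (sS γ * tT γ)
      = sS γ^2 * (aR γ^2 + 4*hhR γ^2 + 2*tT γ) := by ring
  rw [e, hs2 hγ, hpt hγ]
  field_simp

lemma R2 : (sS γ * tT γ)^2 = sS γ^2 * (aR γ^2 * hhR γ^2) := by
  unfold tT
  ring

lemma traceT1R : sS γ * (2*aR γ^2 + 8*hhR γ^2) + (sS γ * tT γ) * 4 = dG γ * 2/(1+γ) := by
  have hne := (h1γ hγ).ne'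
  have hdne := (hdpos hγ).ne'
  have e : sS γ * (2*aR γ^2 + 8*hhR γ^2) + (sS γ * tT γ) * 4
      = sS γ * (2 * (aR γ^2 + 4*hhR γ^2 + 2*tT γ)) := by ring
  rw [e, hpt hγ, ← hdsq hγ]
  unfold sS
  field_simp

end scal

lemma T1sq (γ:ℝ) (hγ : 2 ≤ γ) : T1c γ * T1c γ = B1c γ := by
  have e1 := R1 hγ
  have e2 := R2 (γ:=γ) hγ
  have hc1 : ((sS γ^2 * (aR γ^2 + 4*hhR γ^2) + 2 * sS γ * (sS γ * tT γ) : ℝ):ℂ) = 1 := by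
    rw [e1]; norm_num
  have hc2 : (((sS γ * tT γ)^2 : ℝ):ℂ) = ((sS γ^2 * (aR γ^2 * hhR γ^2) : ℝ):ℂ) :=
    congrArg _ e2
  push_cast at hc1 hc2
  unfold T1c
  rw [add_mul, mul_add, mul_add, smul_mul_smul_comm, smul_mul_smul_comm,
    smul_mul_smul_comm, smul_mul_smul_comm, hB1sq γ, Matrix.mul_one, Matrix.one_mul,
    Matrix.mul_one]
  match_scalars
  · push_cast
    linear_combination hc1
  · push_cast
    linear_combination hc2

lemma T2sq (γ:ℝ) (hγ : 2 ≤ γ) : T2c γ * T2c γ = B2c γ := by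
  have e1 := R1 hγ
  have e2 := R2 (γ:=γ) hγ
  have hc1 : ((sS γ^2 * (aR γ^2 + 4*hhR γ^2) + 2 * sS γ * (sS γ * tT γ) : ℝ):ℂ) = 1 := by
    rw [e1]; norm_num
  have hc2 : (((sS γ * tT γ)^2 : ℝ):ℂ) = ((sS γ^2 * (aR γ^2 * hhR γ^2) : ℝ):ℂ) :=
    congrArg _ e2
  push_cast at hc1 hc2
  unfold T2c
  rw [add_mul, mul_add, mul_add, smul_mul_smul_comm, smul_mul_smul_comm,
    smul_mul_smul_comm, smul_mul_smul_comm, hB2sq γ, Matrix.mul_one, Matrix.one_mul,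
    Matrix.mul_one]
  match_scalars
  · push_cast
    linear_combination hc1
  · push_cast
    linear_combination hc2

lemma PT_PT (A : M4) : PT (PT A) = A := rfl

lemma B1psd (γ:ℝ) : (B1c γ).PosSemidef := by
  have h := Matrix.posSemidef_conjTranspose_mul_self (A1c γ)
  rwa [hermA1 γ, hB1 γ] at h

lemma B2psd (γ:ℝ) : (B2c γ).PosSemidef := by
  have h := Matrix.posSemidef_conjTranspose_mul_self (A2c γ)
  rwa [hermA2 γ, hB2 γ] at h

section scal2
variable {γ : ℝ} (hγ : 2 ≤ γ)
include hγ

lemma sS_nonneg : 0 ≤ sS γ := div_nonneg (by linarith) (hdpos hγ).le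
lemma tT_nonneg : 0 ≤ tT γ := by
  have h := h1γ hγ
  unfold tT aR hhR
  positivity

lemma T1psd : (T1c γ).PosSemidef :=
  (psd_smul (B1psd γ) (sS_nonneg hγ)).add
    (psd_smul Matrix.PosSemidef.one (mul_nonneg (sS_nonneg hγ) (tT_nonneg hγ)))

lemma T2psd : (T2c γ).PosSemidef :=
  (psd_smul (B2psd γ) (sS_nonneg hγ)).add
    (psd_smul Matrix.PosSemidef.one (mul_nonneg (sS_nonneg hγ) (tT_nonneg hγ)))

end scal2

lemma PT_T1c (γ:ℝ) : PT (T1c γ) = T2c γ := by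
  unfold T1c T2c
  rw [PT_add, PT_smul, PT_smul, hPTB1, PT_one]

lemma PT_T2c (γ:ℝ) : PT (T2c γ) = T1c γ := by
  have h := congrArg PT (PT_T1c γ)
  rw [PT_PT] at h
  exact h.symm

lemma traceT1c (γ:ℝ) (hγ : 2 ≤ γ) : (T1c γ).trace = ((dG γ * 2/(1+γ) : ℝ):ℂ) := by
  unfold T1c
  rw [Matrix.trace_add, Matrix.trace_smul, Matrix.trace_smul, traceB1, Matrix.trace_one]
  have hc : ((sS γ * (2*aR γ^2 + 8*hhR γ^2) + (sS γ * tT γ) * 4 : ℝ):ℂ)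
      = ((dG γ * 2/(1+γ) : ℝ):ℂ) := congrArg _ (traceT1R hγ)
  push_cast at hc ⊢
  simp only [smul_eq_mul]
  simp
  linear_combination hc

lemma traceT2c (γ:ℝ) (hγ : 2 ≤ γ) : (T2c γ).trace = ((dG γ * 2/(1+γ) : ℝ):ℂ) := by
  unfold T2c
  rw [Matrix.trace_add, Matrix.trace_smul, Matrix.trace_smul, traceB2, Matrix.trace_one]
  have hc : ((sS γ * (2*aR γ^2 + 8*hhR γ^2) + (sS γ * tT γ) * 4 : ℝ):ℂ)
      = ((dG γ * 2/(1+γ) : ℝ):ℂ) := congrArg _ (traceT1R hγ)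
  push_cast at hc ⊢
  simp only [smul_eq_mul]
  simp
  linear_combination hc

theorem stmt_19' (γ : ℝ) (hγ : 2 ≤ γ)
    (P0p P1m P1p P0m : M4)
    (h1 : IsSpectralPair (rt0p γ - rt1m γ) P0p P1m)
    (h2 : IsSpectralPair (rt1p γ - rt0m γ) P1p P0m) :
    let K0 : M4 := (1/2 : ℂ) • (rt0p γ * P0p) + (1/2 : ℂ) • (rt1m γ * P1m)
    let K1 : M4 := (1/2 : ℂ) • (rt1p γ * P1p) + (1/2 : ℂ) • (rt0m γ * P0m)
    let Ht : M4 := (1/4 : ℂ) • K0 + (1/4 : ℂ) • K1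
    let rts : Fin 4 → M4 := ![rt0p γ, rt1p γ, rt0m γ, rt1m γ]
    (∀ i : Fin 4,
        (∃ P Q : M4, P.PosSemidef ∧ Q.PosSemidef ∧
            Ht - (1/4 : ℂ) • rts i = P + PT Q)
        ∧ ∀ B : M4, Separable B → 0 ≤ ((Ht - (1/4 : ℂ) • rts i) * B).trace)
    ∧ 2 * Ht.trace = (((1/2) * (1 + Real.sqrt (1 + γ + γ^2) / (1 + γ)) : ℝ) : ℂ) := by
  intro K0 K1 Ht rts
  have hne : (1+γ) ≠ 0 := (h1γ hγ).ne'
  obtain ⟨_, _, hPP1, _, hPN1, hcomm1, hpos1, hneg1, -⟩ := h1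
  obtain ⟨_, _, hPP2, _, hPN2, hcomm2, hpos2, hneg2, -⟩ := h2
  have hK0def : K0 = (1/2 : ℂ) • (rt0p γ * P0p) + (1/2 : ℂ) • (rt1m γ * P1m) := rfl
  have hK1def : K1 = (1/2 : ℂ) • (rt1p γ * P1p) + (1/2 : ℂ) • (rt0m γ * P0m) := rfl
  have hHtdef : Ht = (1/4 : ℂ) • K0 + (1/4 : ℂ) • K1 := rfl
  obtain ⟨hK0a, hK0b, hK0c⟩ := Kdec (rt0p γ) (rt1m γ) P0p P1m hPN1
  obtain ⟨hK1a, hK1b, hK1c⟩ := Kdec (rt1p γ) (rt0m γ) P1p P0m hPN2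
  have hAsq1 : T1c γ * T1c γ = (rt0p γ - rt1m γ) * (rt0p γ - rt1m γ) := by
    rw [T1sq γ hγ, ← hB1 γ, ← hA1 γ hne]
  have hAsq2 : T2c γ * T2c γ = (rt1p γ - rt0m γ) * (rt1p γ - rt0m γ) := by
    rw [T2sq γ hγ, ← hB2 γ, ← hA2 γ hne]
  have hAP1 : (rt0p γ - rt1m γ) * P0p = (1/2:ℂ)•T1c γ + (1/2:ℂ)•(rt0p γ - rt1m γ) :=
    Sfacts _ _ _ _ hPP1 hPN1 hcomm1 hpos1 hneg1 (T1psd hγ) hAsq1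
  have hAP2 : (rt1p γ - rt0m γ) * P1p = (1/2:ℂ)•T2c γ + (1/2:ℂ)•(rt1p γ - rt0m γ) :=
    Sfacts _ _ _ _ hPP2 hPN2 hcomm2 hpos2 hneg2 (T2psd hγ) hAsq2
  have hK0e : K0 = (1/2:ℂ)•rt1m γ + ((1/4:ℂ)•T1c γ + (1/4:ℂ)•(rt0p γ - rt1m γ)) := by
    rw [hK0def, hK0a, hAP1]
    module
  have hK1e : K1 = (1/2:ℂ)•rt0m γ + ((1/4:ℂ)•T2c γ + (1/4:ℂ)•(rt1p γ - rt0m γ)) := by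
    rw [hK1def, hK1a, hAP2]
    module
  have hsw : rt0p γ = rt1p γ + rt0m γ - rt1m γ := by
    rw [← rt_swap γ]; abel
  have hPTK0 : PT K0 = K1 := by
    rw [hK0e, PT_add, PT_add, PT_smul, PT_smul, PT_smul, PT_rt1m, PT_T1c, PT_sub,
      PT_rt0p, PT_rt1m, hK1e, hsw]
    module
  have hPTK1 : PT K1 = K0 := by
    rw [← hPTK0, PT_PT]
  have hcast : ((1/8:ℝ):ℂ) = (1/8:ℂ) := by norm_num
  -- the four PSD pieces
  have hX0psd : ((1/8:ℂ)•((-(rt0p γ - rt1m γ))*P1m)).PosSemidef := by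
    rw [← hcast]; exact psd_smul hneg1 (by norm_num)
  have hX1psd : ((1/8:ℂ)•((-(rt1p γ - rt0m γ))*P0m)).PosSemidef := by
    rw [← hcast]; exact psd_smul hneg2 (by norm_num)
  have hX2psd : ((1/8:ℂ)•((rt1p γ - rt0m γ)*P1p)).PosSemidef := by
    rw [← hcast]; exact psd_smul hpos2 (by norm_num)
  have hX3psd : ((1/8:ℂ)•((rt0p γ - rt1m γ)*P0p)).PosSemidef := by
    rw [← hcast]; exact psd_smul hpos1 (by norm_num)
  have hXeq0 : (1/4:ℂ)•(K0 - (1/2:ℂ)•rt0p γ) = (1/8:ℂ)•((-(rt0p γ - rt1m γ))*P1m) := by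
    rw [hK0def, hK0b, smul_smul]; norm_num
  have hXeq1 : (1/4:ℂ)•(K1 - (1/2:ℂ)•rt1p γ) = (1/8:ℂ)•((-(rt1p γ - rt0m γ))*P0m) := by
    rw [hK1def, hK1b, smul_smul]; norm_num
  have hXeq2 : (1/4:ℂ)•(K1 - (1/2:ℂ)•rt0m γ) = (1/8:ℂ)•((rt1p γ - rt0m γ)*P1p) := by
    rw [hK1def, hK1c, smul_smul]; norm_num
  have hXeq3 : (1/4:ℂ)•(K0 - (1/2:ℂ)•rt1m γ) = (1/8:ℂ)•((rt0p γ - rt1m γ)*P0p) := by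
    rw [hK0def, hK0c, smul_smul]; norm_num
  constructor
  · intro i
    fin_cases i
    · -- rt0p, uses K0 part and PT to K1
      have hX := hX0psd
      set X : M4 := (1/8:ℂ)•((-(rt0p γ - rt1m γ))*P1m) with hXd
      have hPTX : PT X = (1/4:ℂ)•(K1 - (1/2:ℂ)•rt0p γ) := by
        rw [← hXeq0, PT_smul, PT_sub, PT_smul, hPTK0, PT_rt0p]
      have hdec : Ht - (1/4 : ℂ) • rt0p γ = X + PT X := by
        rw [hPTX, ← hXeq0, hHtdef]
        module
      refine ⟨⟨X, X, hX, hX, hdec⟩, ?_⟩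
      intro B hB
      obtain ⟨hBp, hBq⟩ := sep_psd hB
      show 0 ≤ ((Ht - (1/4:ℂ) • rt0p γ) * B).trace
      rw [hdec, Matrix.add_mul, Matrix.trace_add]
      refine add_nonneg (psd_mul_trace hX hBp) ?_
      rw [trace_PT_mul]
      exact psd_mul_trace hX hBq
    · have hX := hX1psd
      set X : M4 := (1/8:ℂ)•((-(rt1p γ - rt0m γ))*P0m) with hXd
      have hPTX : PT X = (1/4:ℂ)•(K0 - (1/2:ℂ)•rt1p γ) := by
        rw [← hXeq1, PT_smul, PT_sub, PT_smul, hPTK1, PT_rt1p]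
      have hdec : Ht - (1/4 : ℂ) • rt1p γ = X + PT X := by
        rw [hPTX, ← hXeq1, hHtdef]
        module
      refine ⟨⟨X, X, hX, hX, hdec⟩, ?_⟩
      intro B hB
      obtain ⟨hBp, hBq⟩ := sep_psd hB
      show 0 ≤ ((Ht - (1/4:ℂ) • rt1p γ) * B).trace
      rw [hdec, Matrix.add_mul, Matrix.trace_add]
      refine add_nonneg (psd_mul_trace hX hBp) ?_
      rw [trace_PT_mul]
      exact psd_mul_trace hX hBq
    · have hX := hX2psd
      set X : M4 := (1/8:ℂ)•((rt1p γ - rt0m γ)*P1p) with hXd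
      have hPTX : PT X = (1/4:ℂ)•(K0 - (1/2:ℂ)•rt0m γ) := by
        rw [← hXeq2, PT_smul, PT_sub, PT_smul, hPTK1, PT_rt0m]
      have hdec : Ht - (1/4 : ℂ) • rt0m γ = X + PT X := by
        rw [hPTX, ← hXeq2, hHtdef]
        module
      refine ⟨⟨X, X, hX, hX, hdec⟩, ?_⟩
      intro B hB
      obtain ⟨hBp, hBq⟩ := sep_psd hB
      show 0 ≤ ((Ht - (1/4:ℂ) • rt0m γ) * B).trace
      rw [hdec, Matrix.add_mul, Matrix.trace_add]
      refine add_nonneg (psd_mul_trace hX hBp) ?_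
      rw [trace_PT_mul]
      exact psd_mul_trace hX hBq
    · have hX := hX3psd
      set X : M4 := (1/8:ℂ)•((rt0p γ - rt1m γ)*P0p) with hXd
      have hPTX : PT X = (1/4:ℂ)•(K1 - (1/2:ℂ)•rt1m γ) := by
        rw [← hXeq3, PT_smul, PT_sub, PT_smul, hPTK0, PT_rt1m]
      have hdec : Ht - (1/4 : ℂ) • rt1m γ = X + PT X := by
        rw [hPTX, ← hXeq3, hHtdef]
        module
      refine ⟨⟨X, X, hX, hX, hdec⟩, ?_⟩
      intro B hB
      obtain ⟨hBp, hBq⟩ := sep_psd hB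
      show 0 ≤ ((Ht - (1/4:ℂ) • rt1m γ) * B).trace
      rw [hdec, Matrix.add_mul, Matrix.trace_add]
      refine add_nonneg (psd_mul_trace hX hBp) ?_
      rw [trace_PT_mul]
      exact psd_mul_trace hX hBq
  · -- trace computation
    have htrK0 : K0.trace = 1/2 + (1/4:ℂ) * ((dG γ * 2/(1+γ) : ℝ):ℂ) := by
      rw [hK0e, Matrix.trace_add, Matrix.trace_add, Matrix.trace_smul, Matrix.trace_smul,
        Matrix.trace_smul, Matrix.trace_sub, trace_rt1m γ hne, trace_rt0p γ hne,
        traceT1c γ hγ]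
      simp [smul_eq_mul]
    have htrK1 : K1.trace = 1/2 + (1/4:ℂ) * ((dG γ * 2/(1+γ) : ℝ):ℂ) := by
      rw [hK1e, Matrix.trace_add, Matrix.trace_add, Matrix.trace_smul, Matrix.trace_smul,
        Matrix.trace_smul, Matrix.trace_sub, trace_rt0m γ hne, trace_rt1p γ hne,
        traceT2c γ hγ]
      simp [smul_eq_mul]
    rw [hHtdef, Matrix.trace_add, Matrix.trace_smul, Matrix.trace_smul, htrK0, htrK1]
    have hneC : ((1:ℂ)+γ) ≠ 0 := by exact_mod_cast hne
    unfold dG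
    push_cast
    field_simp
    have h8 : (8 + (γ:ℂ)*8) ≠ 0 := by
      rw [show (8 + (γ:ℂ)*8) = 8*(1+γ) by ring]; exact mul_ne_zero (by norm_num) hneC
    linear_combination ((Real.sqrt (1+γ+γ^2) : ℂ) + 1 + (γ:ℂ)) * mul_inv_cancel₀ h8

/-- H̃ = (1/4)K₀ + (1/4)K₁ satisfies H̃ − (1/4)ρ̃ω = PSD + PT(PSD) for each ω,
hence Tr((H̃ − (1/4)ρ̃ω)B) ≥ 0 for all separable PSD B, and 2Tr H̃ = (1/2)(1+√(1+γ+γ²)/(1+γ)). -/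
theorem stmt_19 (γ : ℝ) (hγ : 2 ≤ γ)
    (P0p P1m P1p P0m : M4)
    (h1 : IsSpectralPair (rt0p γ - rt1m γ) P0p P1m)
    (h2 : IsSpectralPair (rt1p γ - rt0m γ) P1p P0m) :
    let K0 : M4 := (1/2 : ℂ) • (rt0p γ * P0p) + (1/2 : ℂ) • (rt1m γ * P1m)
    let K1 : M4 := (1/2 : ℂ) • (rt1p γ * P1p) + (1/2 : ℂ) • (rt0m γ * P0m)
    let Ht : M4 := (1/4 : ℂ) • K0 + (1/4 : ℂ) • K1
    let rts : Fin 4 → M4 := ![rt0p γ, rt1p γ, rt0m γ, rt1m γ]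
    (∀ i : Fin 4,
        (∃ P Q : M4, P.PosSemidef ∧ Q.PosSemidef ∧
            Ht - (1/4 : ℂ) • rts i = P + PT Q)
        ∧ ∀ B : M4, Separable B → 0 ≤ ((Ht - (1/4 : ℂ) • rts i) * B).trace)
    ∧ 2 * Ht.trace = (((1/2) * (1 + Real.sqrt (1 + γ + γ^2) / (1 + γ)) : ℝ) : ℂ) :=
  stmt_19' γ hγ P0p P1m P1p P0m h1 h2
end
end
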